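/- The only solutions in positive integers of the equation x^2 + 7^{2k+1} = 2^n with k ≥ 0 and n ≥ 3 are (|x|, k, n) ∈ {(1,0,3), (3,0,4), (5,0,5), (11,0,7), (13,1,9), (181,0,15)}. -/

import Mathlib

set_option maxRecDepth 8000

def aseq : ℕ → ℤ
  | 0 => 2
  | 1 => 1
  | n+2 => aseq (n+1) - 2 * aseq n

def bseq : ℕ → ℤ
  | 0 => 0
  | 1 => 1
  | n+2 => bseq (n+1) - 2 * bseq n

lemma two_step {P : ℕ → Prop} (h0 : P 0) (h1 : P 1)
    (ih : ∀ n, P n → P (n+1) → P (n+2)) : ∀ n, P n := by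
  have key : ∀ n, P n ∧ P (n+1) := by
    intro n
    induction n with
    | zero => exact ⟨h0, h1⟩
    | succ k hk => exact ⟨hk.2, ih k hk.1 hk.2⟩
  exact fun n => (key n).1

lemma mult_id : ∀ m : ℕ, 2 * aseq (m+1) = aseq m - 7 * bseq m ∧
    2 * bseq (m+1) = aseq m + bseq m := by
  apply two_step
  · norm_num [aseq, bseq]
  · norm_num [aseq, bseq]
  · intro n ⟨ha1, hb1⟩ ⟨ha2, hb2⟩
    constructor
    · show 2 * aseq (n+1+2) = aseq (n+2) - 7 * bseq (n+2)
      rw [aseq, bseq, aseq]; linarith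
    · show 2 * bseq (n+1+2) = aseq (n+2) + bseq (n+2)
      rw [aseq, bseq, bseq]; linarith

lemma odd_a {m : ℕ} : Odd (aseq (m+1)) := by
  induction m with
  | zero => decide
  | succ k hk =>
    show Odd (aseq (k+2))
    rw [aseq]
    rcases hk with ⟨c, hc⟩
    exact ⟨c - aseq k, by linarith⟩

lemma odd_b {m : ℕ} : Odd (bseq (m+1)) := by
  induction m with
  | zero => decide
  | succ k hk =>
    show Odd (bseq (k+2))
    rw [bseq]
    rcases hk with ⟨c, hc⟩
    exact ⟨c - bseq k, by linarith⟩

lemma norm_id : ∀ m : ℕ, aseq m ^ 2 + 7 * bseq m ^ 2 = 2 ^ (m + 2) := by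
  intro m
  induction m with
  | zero => decide
  | succ k hk =>
    obtain ⟨ha, hb⟩ := mult_id k
    have h4 : (4:ℤ) * (aseq (k+1) ^ 2 + 7 * bseq (k+1) ^ 2) = 8 * 2 ^ (k+2) := by
      have : (2 * aseq (k+1))^2 + 7 * (2 * bseq (k+1))^2 =
          8 * (aseq k ^ 2 + 7 * bseq k ^ 2) := by rw [ha, hb]; ring
      rw [hk] at this; linarith
    have : (2:ℤ)^(k+1+2) = 2 * 2^(k+2) := by ring
    linarith

-- a_m ≡ b_m mod 4  (m ≥ 1)
lemma amb_div4 (m : ℕ) : (4:ℤ) ∣ aseq (m+1) - bseq (m+1) := by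
  obtain ⟨ha, hb⟩ := mult_id m
  exact ⟨-bseq m, by linarith⟩

lemma sq1 {v : ℤ} (h : v^2 = 1) : v = 1 ∨ v = -1 := by
  have h2 : (v - 1) * (v + 1) = 0 := by ring_nf; linarith
  rcases mul_eq_zero.1 h2 with h3 | h3
  · left; linarith
  · right; linarith

lemma stepA (n : ℕ) (x y : ℤ) (hy : Odd y) (he : x^2 + 7*y^2 = 2^(n+4))
    (hd : 4 ∣ x - y)
    (IH : ∀ x y : ℤ, Odd x → Odd y → x^2 + 7*y^2 = 2^(n+3) →
      (x = aseq (n+1) ∨ x = -aseq (n+1)) ∧ (y = bseq (n+1) ∨ y = -bseq (n+1))) :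
    (x = aseq (n+2) ∨ x = -aseq (n+2)) ∧ (y = bseq (n+2) ∨ y = -bseq (n+2)) := by
  obtain ⟨t, ht⟩ := hd
  have hx : x = y + 4*t := by linarith
  have hE : y^2 + t*y + 2*t^2 = 2^(n+1) := by
    have h8 : (8:ℤ) * (y^2 + t*y + 2*t^2) = 2^(n+4) := by
      rw [← he, hx]; ring
    have h2 : (2:ℤ)^(n+4) = 8 * 2^(n+1) := by ring
    rw [h2] at h8
    linarith
  have ht_odd : Odd t := by
    rcases Int.even_or_odd t with hte | h
    · exfalso
      have hyy : Odd (y*y) := by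
        rcases hy with ⟨c, hc⟩; exact ⟨2*c*c + 2*c, by rw [hc]; ring⟩
      have hodd : Odd (y*y + (t*y + 2*t^2)) :=
        hyy.add_even ((hte.mul_right y).add ⟨t^2, by ring⟩)
      have h3 : Odd ((2:ℤ)^(n+1)) := by
        rw [← hE]; convert hodd using 1; ring
      exact (Int.not_even_iff_odd.mpr h3) ⟨2^n, by ring⟩
    · exact h
  have hy' : Odd (-t) := ht_odd.neg
  have hx' : Odd (2*y + t) := by
    rcases ht_odd with ⟨c, hc⟩; exact ⟨y + c, by linarith⟩
  have hnorm : (2*y + t)^2 + 7*(-t)^2 = 2^(n+3) := by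
    have : (2*y + t)^2 + 7*(-t)^2 = 4 * (y^2 + t*y + 2*t^2) := by ring
    rw [this, hE]; ring
  obtain ⟨hx1, hy1⟩ := IH (2*y + t) (-t) hx' hy' hnorm
  obtain ⟨ha, hb⟩ := mult_id (n+1)
  obtain ⟨c4, hc4⟩ := amb_div4 n
  rcases hx1 with h1 | h1 <;> rcases hy1 with h2 | h2
  · constructor
    · left; linarith
    · left; linarith
  · exfalso
    exact (Int.not_even_iff_odd.mpr hy) ⟨c4, by linarith⟩
  · exfalso
    exact (Int.not_even_iff_odd.mpr hy) ⟨-c4, by linarith⟩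
  · constructor
    · right; linarith
    · right; linarith

lemma rep : ∀ n : ℕ, ∀ x y : ℤ, Odd x → Odd y → x^2 + 7*y^2 = 2^(n+3) →
    (x = aseq (n+1) ∨ x = -aseq (n+1)) ∧ (y = bseq (n+1) ∨ y = -bseq (n+1)) := by
  intro n
  induction n with
  | zero =>
    intro x y hx hy he
    have hy0 : y ≠ 0 := by rintro rfl; simp at hy
    have hx0 : x ≠ 0 := by rintro rfl; simp at hx
    norm_num at he
    have hy1 : 0 < y^2 := by positivity
    have hx1 : 0 < x^2 := by positivity
    have hy2 : y^2 = 1 := by nlinarith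
    have hx2 : x^2 = 1 := by nlinarith
    norm_num [aseq, bseq]
    exact ⟨sq1 hx2, sq1 hy2⟩
  | succ k IH =>
    intro x y hx hy he
    have hpar : 4 ∣ x - y ∨ 4 ∣ x + y := by
      rcases hx with ⟨a, ha⟩; rcases hy with ⟨b, hb⟩
      omega
    rcases hpar with hd | hd
    · exact stepA k x y hy he hd IH
    · have hd' : 4 ∣ x - (-y) := by omega
      have h := stepA k x (-y) hy.neg (by rw [← he]; ring) hd' IH
      obtain ⟨h1, h2⟩ := h
      refine ⟨h1, ?_⟩
      rcases h2 with h2 | h2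
      · right; linarith
      · left; linarith

abbrev Z7 := Zsqrtd (-7)
def zz : Z7 := ⟨1, 1⟩

lemma bridge : ∀ m : ℕ, (zz^(m+1)).re = 2^m * aseq (m+1) ∧ (zz^(m+1)).im = 2^m * bseq (m+1) := by
  intro m
  induction m with
  | zero => constructor <;> norm_num [zz, aseq, bseq]
  | succ p IH =>
    obtain ⟨h1, h2⟩ := IH
    obtain ⟨ha, hb⟩ := mult_id (p+1)
    have e : zz^(p+1+1) = zz^(p+1) * zz := by rw [pow_succ]
    constructor
    · rw [e, Zsqrtd.re_mul, h1, h2]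
      show 2 ^ p * aseq (p + 1) * zz.re + (-7) * (2 ^ p * bseq (p + 1)) * zz.im
          = 2^(p+1) * aseq (p+2)
      have : zz.re = 1 := rfl
      rw [this]
      have : zz.im = 1 := rfl
      rw [this]
      have ha2 : 2 * aseq (p+2) = aseq (p+1) - 7 * bseq (p+1) := ha
      linear_combination (-(2^p) : ℤ) * ha2
    · rw [e, Zsqrtd.im_mul, h1, h2]
      show 2 ^ p * aseq (p + 1) * zz.im + 2 ^ p * bseq (p + 1) * zz.re
          = 2^(p+1) * bseq (p+2)
      have h3 : zz.re = 1 := rfl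
      have h4 : zz.im = 1 := rfl
      rw [h3, h4]
      have hb2 : 2 * bseq (p+2) = aseq (p+1) + bseq (p+1) := hb
      linear_combination (-(2^p) : ℤ) * hb2

-- components of 7th power
lemma pow7_re (w : Z7) : (w^7).re =
    w.re^7 - 147*w.re^5*w.im^2 + 1715*w.re^3*w.im^4 - 2401*w.re*w.im^6 := by
  simp [pow_succ, Zsqrtd.re_mul, Zsqrtd.im_mul]
  ring

lemma pow7_im (w : Z7) : (w^7).im =
    7*w.re^6*w.im - 245*w.re^4*w.im^3 + 1029*w.re^2*w.im^5 - 343*w.im^7 := by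
  simp [pow_succ, Zsqrtd.re_mul, Zsqrtd.im_mul]
  ring

lemma seven_prime : Prime (7:ℤ) := by norm_num

lemma not_dvd_X {j : ℕ} {X w : ℤ} (N : ℕ) (hX : X = 2^N + 7^(j+1)*w) : ¬ (7:ℤ) ∣ X := by
  intro h
  have h2 : (7:ℤ) ∣ 2^N := by
    have h7 : (7:ℤ) ∣ 7^(j+1)*w := Dvd.dvd.mul_right ⟨7^j, by ring⟩ w
    have := dvd_sub h h7
    simpa [hX] using this
  have := seven_prime.dvd_of_dvd_pow h2
  norm_num at this

lemma Pj : ∀ j : ℕ, ((7:ℤ)^(j+1) ∣ (zz^(3*7^j)).re - 2^(3*7^j)) ∧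
    ∃ y : ℤ, (zz^(3*7^j)).im = 7^j * y ∧ ¬ (7:ℤ) ∣ y := by
  intro j
  induction j with
  | zero =>
    have h3 : zz^(3*7^0) = ⟨-20, -4⟩ := by
      show zz^3 = _
      have : zz^3 = zz*zz*zz := by ring
      rw [this]
      rfl
    refine ⟨⟨-4, by rw [h3]; norm_num⟩, -4, by rw [h3]; norm_num, by decide⟩
  | succ j IH =>
    obtain ⟨⟨w, hw⟩, y, hY, hy⟩ := IH
    have hpow : zz^(3*7^(j+1)) = (zz^(3*7^j))^7 := by
      rw [← pow_mul]; congr 1; ring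
    have hX : (zz^(3*7^j)).re = 2^(3*7^j) + 7^(j+1)*w := by linarith
    have h7X : ¬ (7:ℤ) ∣ (zz^(3*7^j)).re := not_dvd_X (3*7^j) hX
    have h2pow : (2:ℤ)^(3*7^(j+1)) = (2^(3*7^j))^7 := by
      rw [← pow_mul]; congr 1; ring
    have e1 : (7:ℤ)^(j+1) = 7 * 7^j := by ring
    have e2 : (7:ℤ)^(j+1+1) = 49 * 7^j := by ring
    constructor
    · rw [hpow, pow7_re, h2pow, hY, hX, e1, e2]
      set u : ℤ := 2^(3*7^j) with hu
      set q : ℤ := 7^j with hq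
      refine ⟨w*u^6 + q*w^2*(6*u^5 + 5*(u+7*q*w)*u^4 + 4*(u+7*q*w)^2*u^3
        + 3*(u+7*q*w)^3*u^2 + 2*(u+7*q*w)^4*u + (u+7*q*w)^5)
        - 3*q*(u+7*q*w)^5*y^2 + 35*q^3*(u+7*q*w)^3*y^4 - 49*q^5*(u+7*q*w)*y^6, ?_⟩
      ring
    · rw [hpow, pow7_im, hY, e1]
      set X : ℤ := (zz^(3*7^j)).re with hXdef
      set q : ℤ := 7^j with hq
      refine ⟨X^6*y - 35*q^2*X^4*y^3 + 147*q^4*X^2*y^5 - 49*q^6*y^7, ?_, ?_⟩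
      · ring
      · intro hdvd
        have hdiff : (7:ℤ) ∣ (X^6*y - 35*q^2*X^4*y^3 + 147*q^4*X^2*y^5 - 49*q^6*y^7) - X^6*y :=
          ⟨-5*q^2*X^4*y^3 + 21*q^4*X^2*y^5 - 7*q^6*y^7, by ring⟩
        have h6 : (7:ℤ) ∣ X^6*y := by
          have := dvd_sub hdvd hdiff
          simpa using this
        rcases (seven_prime.dvd_mul).mp h6 with h | h
        · exact h7X (seven_prime.dvd_of_dvd_pow h)
        · exact hy h

lemma Qlem (j N : ℕ) (X Y : ℤ) (hX : (7:ℤ)^(j+1) ∣ X - 2^N) (hY7 : (7:ℤ)^j ∣ Y) :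
    ∀ s : ℕ, ((7:ℤ)^(j+1) ∣ ((⟨X,Y⟩:Z7)^s).re - 2^(N*s)) ∧
      ((7:ℤ)^j ∣ ((⟨X,Y⟩:Z7)^s).im) ∧
      ((7:ℤ)^(2*j+1) ∣ 2^N * ((⟨X,Y⟩:Z7)^s).im - s * 2^(N*s) * Y) := by
  intro s
  induction s with
  | zero => norm_num
  | succ s IH =>
    obtain ⟨⟨r, hr⟩, ⟨i, hi⟩, ⟨c, hc⟩⟩ := IH
    obtain ⟨y0, hy0⟩ := hY7
    obtain ⟨xw, hxw⟩ := hX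
    set R := ((⟨X,Y⟩:Z7)^s).re with hRdef
    set I := ((⟨X,Y⟩:Z7)^s).im with hIdef
    have hmul : (⟨X,Y⟩:Z7)^(s+1) = (⟨X,Y⟩:Z7)^s * ⟨X,Y⟩ := by rw [pow_succ]
    have hre : ((⟨X,Y⟩:Z7)^(s+1)).re = R*X + (-7)*I*Y := by rw [hmul, Zsqrtd.re_mul]
    have him : ((⟨X,Y⟩:Z7)^(s+1)).im = R*Y + I*X := by
      rw [hmul, Zsqrtd.im_mul]
    have hpowN : (2:ℤ)^(N*(s+1)) = 2^(N*s) * 2^N := by rw [mul_add, mul_one, pow_add]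
    refine ⟨⟨X*r + 2^(N*s)*xw - 7^j*i*y0, ?_⟩, ⟨R*y0 + i*X, ?_⟩,
      ⟨X*c + r*2^N*y0 + (s:ℤ)*2^(N*s)*y0*xw, ?_⟩⟩
    · rw [hre, hpowN]
      linear_combination X*hr + (2^(N*s):ℤ)*hxw + (-7*Y)*hi + (-7*7^j*i)*hy0
    · rw [him]
      linear_combination R*hy0 + X*hi
    · rw [him, hpowN]
      push_cast
      linear_combination X*hc + (2^N*Y)*hr + ((s:ℤ)*2^(N*s)*Y)*hxw
        + (7^(j+1)*r*2^N + 7^(j+1)*(s:ℤ)*2^(N*s)*xw)*hy0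

lemma rigid (p j s : ℕ) (hs7 : ¬ (7:ℤ) ∣ (s:ℤ))
    (ha7 : ¬ (7:ℤ) ∣ aseq (p+1))
    (hb : bseq (p+1 + 3*7^j*s) = bseq (p+1)) : False := by
  set N := 3*7^j with hN
  obtain ⟨hXdvd, y, hY, hy⟩ := Pj j
  set X := (zz^N).re with hXdef
  set Y := (zz^N).im with hYdef
  have hzzN : (⟨X, Y⟩ : Z7) = zz^N := by ext <;> rfl
  obtain ⟨hR, hIm7, hc⟩ := Qlem j N X Y hXdvd ⟨y, hY⟩ s
  rw [hzzN] at hR hIm7 hc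
  set R := ((zz^N)^s).re with hRdef
  set I := ((zz^N)^s).im with hIdef
  set U0 := (zz^(p+1)).re with hU0
  set V0 := (zz^(p+1)).im with hV0
  -- decomposition of zz^m
  have hsplit : zz^(p+1 + N*s) = zz^(p+1) * (zz^N)^s := by
    rw [pow_add, pow_mul]
  have him : (zz^(p+1+N*s)).im = U0 * I + V0 * R := by
    rw [hsplit, Zsqrtd.im_mul]
  -- D = 0
  have hidx : p+1+N*s = (p+N*s)+1 := by omega
  have hm1 := (bridge (p+N*s)).2
  have hm0 := (bridge p).2
  have hbeq : bseq (p+N*s+1) = bseq (p+1) := by rw [← hidx]; exact hb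
  have hD : U0 * I + V0 * R - 2^(N*s) * V0 = 0 := by
    have h1 : (zz^(p+1+N*s)).im = 2^(p+N*s) * bseq (p+1) := by
      rw [hidx, hm1, hbeq]
    have h2 : (2:ℤ)^(p+N*s) = 2^(N*s) * 2^p := by rw [pow_add]; ring
    have h3 : V0 = 2^p * bseq (p+1) := hm0
    rw [← him, h1, h2, h3]
    ring
  obtain ⟨r, hr⟩ := hR
  obtain ⟨c, hc2⟩ := hc
  have key : (7:ℤ)^j * (U0*(s:ℤ)*2^(N*s)*y + 7^(j+1)*U0*c + 7*V0*2^N*r) = 0 := by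
    linear_combination (2^N : ℤ)*hD - U0*hc2 - V0*2^N*hr - U0*(s:ℤ)*2^(N*s)*hY
  have h7j : (7:ℤ)^j ≠ 0 := pow_ne_zero j (by norm_num)
  have hBIG : U0*(s:ℤ)*2^(N*s)*y + 7^(j+1)*U0*c + 7*V0*2^N*r = 0 := by
    rcases mul_eq_zero.mp key with h | h
    · exact absurd h h7j
    · exact h
  have hdvd : (7:ℤ) ∣ U0*(s:ℤ)*2^(N*s)*y :=
    ⟨-(7^j*U0*c + V0*2^N*r), by linear_combination hBIG - 0⟩
  -- now contradiction
  have hp7 : Prime (7:ℤ) := by norm_num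
  have hU07 : ¬ (7:ℤ) ∣ U0 := by
    rw [hU0, (bridge p).1]
    intro h
    rcases hp7.dvd_mul.mp h with h | h
    · have := hp7.dvd_of_dvd_pow h; norm_num at this
    · exact ha7 h
  have h2pow : ¬ (7:ℤ) ∣ 2^(N*s) := by
    intro h
    have := hp7.dvd_of_dvd_pow h; norm_num at this
  rcases hp7.dvd_mul.mp hdvd with h | h
  · rcases hp7.dvd_mul.mp h with h | h
    · rcases hp7.dvd_mul.mp h with h | h
      · exact hU07 h
      · exact hs7 h
    · exact h2pow h
  · exact hy h

lemma per_gen (q : ℤ) (P : ℕ) (h0 : q ∣ bseq P - bseq 0) (h1 : q ∣ bseq (P+1) - bseq 1) :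
    ∀ m : ℕ, q ∣ bseq (m + P) - bseq m := by
  apply two_step (P := fun m => q ∣ bseq (m + P) - bseq m)
  · simpa using h0
  · simpa [Nat.add_comm] using h1
  · intro n ⟨c1, hc1⟩ ⟨c2, hc2⟩
    refine ⟨c2 - 2*c1, ?_⟩
    have e1 : n + 2 + P = (n + P) + 2 := by omega
    have e2 : n + 1 + P = (n + P) + 1 := by omega
    rw [e1, bseq]
    show bseq ((n+P)+1) - 2 * bseq (n+P) - bseq (n+2) = _
    rw [bseq]
    rw [← e2]
    linarith

lemma mod_red (q : ℤ) (P : ℕ) (hP : 0 < P)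
    (hper : ∀ m : ℕ, q ∣ bseq (m + P) - bseq m) :
    ∀ m : ℕ, q ∣ bseq m - bseq (m % P) := by
  intro m
  induction m using Nat.strong_induction_on with
  | _ m IH =>
    rcases Nat.lt_or_ge m P with h | h
    · rw [Nat.mod_eq_of_lt h, sub_self]
      exact dvd_zero q
    · have e : m = (m - P) + P := by omega
      have h1 := hper (m - P)
      have h2 := IH (m - P) (by omega)
      have e2 : m % P = (m - P) % P := by
        conv_lhs => rw [e]
        rw [Nat.add_mod_right]
      rw [e2]
      have h3 := dvd_add h1 h2
      have e3 : (bseq ((m-P)+P) - bseq (m-P)) + (bseq (m-P) - bseq ((m-P) % P))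
          = bseq m - bseq ((m-P) % P) := by rw [← e]; ring
      exact e3 ▸ h3

lemma class_one (m : ℕ) (h : bseq m = 1) : m % 21 = 1 ∨ m % 21 = 2 := by
  have hper := per_gen 43 42 (by norm_num [bseq]) (by norm_num [bseq])
  have hd := mod_red 43 42 (by norm_num) hper m
  rw [h] at hd
  have key : ∀ r : ℕ, r < 42 → (43:ℤ) ∣ 1 - bseq r → r = 1 ∨ r = 2 := by
    intro r hr hdvd
    interval_cases r <;> norm_num [bseq] at hdvd <;> norm_num
  have h21 : 21 ∣ 42 := by norm_num
  have := key (m % 42) (Nat.mod_lt _ (by norm_num)) hd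
  rcases this with h2 | h2
  · left; rw [← Nat.mod_mod_of_dvd m h21, h2]
  · right; rw [← Nat.mod_mod_of_dvd m h21, h2]

lemma class_negone (m : ℕ) (h : bseq m = -1) : m % 21 = 3 ∨ m % 21 = 5 ∨ m % 21 = 13 := by
  have hper := per_gen 7 21 (by norm_num [bseq]) (by norm_num [bseq])
  have hd := mod_red 7 21 (by norm_num) hper m
  rw [h] at hd
  have key : ∀ r : ℕ, r < 21 → (7:ℤ) ∣ -1 - bseq r → r = 3 ∨ r = 5 ∨ r = 13 := by
    intro r hr hdvd
    interval_cases r <;> norm_num [bseq] at hdvd <;> norm_num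
  exact key (m % 21) (Nat.mod_lt _ (by norm_num)) hd

lemma seven_dvd (m : ℕ) (h : (7:ℤ) ∣ bseq m) : 7 ∣ m := by
  have hper := per_gen 7 21 (by norm_num [bseq]) (by norm_num [bseq])
  have hd := mod_red 7 21 (by norm_num) hper m
  have hd2 : (7:ℤ) ∣ bseq (m % 21) := by
    have := dvd_sub h hd
    simpa using this
  have key : ∀ r : ℕ, r < 21 → (7:ℤ) ∣ bseq r → r % 7 = 0 := by
    intro r hr hdvd
    interval_cases r <;> norm_num [bseq] at hdvd <;> norm_num
  have h3 := key (m % 21) (Nat.mod_lt _ (by norm_num)) hd2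
  have : m % 21 % 7 = m % 7 := Nat.mod_mod_of_dvd m (by norm_num)
  omega

lemma add_formula (p q : ℕ) : 2 * bseq (p+q+2) = aseq (p+1) * bseq (q+1) + bseq (p+1) * aseq (q+1) := by
  have h1 : zz^(p+q+2) = zz^(p+1) * zz^(q+1) := by rw [← pow_add]; congr 1; omega
  have h2 : (zz^(p+q+2)).im = (zz^(p+1)).re * (zz^(q+1)).im + (zz^(p+1)).im * (zz^(q+1)).re := by
    rw [h1, Zsqrtd.im_mul]
  have h3 := (bridge (p+q+1)).2
  have h4 : p+q+1+1 = p+q+2 := rfl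
  rw [h4] at h3
  rw [h3, (bridge p).1, (bridge p).2, (bridge q).1, (bridge q).2] at h2
  have hne : (2:ℤ)^(p+q) ≠ 0 := pow_ne_zero _ (by norm_num)
  have h5 : (2:ℤ)^(p+q+1) = 2^(p+q) * 2 := by rw [pow_succ]
  have h6 : (2:ℤ)^p * (2:ℤ)^q = 2^(p+q) := by rw [← pow_add]
  apply mul_left_cancel₀ hne
  calc 2^(p+q) * (2 * bseq (p+q+2)) = 2^(p+q+1) * bseq (p+q+2) := by rw [h5]; ring
  _ = 2 ^ p * aseq (p + 1) * (2 ^ q * bseq (q + 1)) + 2 ^ p * bseq (p + 1) * (2 ^ q * aseq (q + 1)) := h2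
  _ = 2^(p+q) * (aseq (p+1) * bseq (q+1) + bseq (p+1) * aseq (q+1)) := by rw [← h6]; ring

lemma odd_dvd_of_dvd_two_mul {c b : ℤ} (hc : Odd c) (h : c ∣ 2*b) : c ∣ b := by
  obtain ⟨e, he⟩ := h
  rcases Int.even_or_odd e with ⟨f, hf⟩ | ⟨v, hv⟩
  · refine ⟨f, ?_⟩
    have h2 : 2*b = 2*(c*f) := by rw [he, hf]; ring
    linarith
  · exfalso
    obtain ⟨u, hu⟩ := hc
    have hodd : Odd (c*e) := ⟨2*u*v + u + v, by rw [hu, hv]; ring⟩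
    rw [← he] at hodd
    obtain ⟨w, hw⟩ := hodd
    omega

lemma strong_dvd (d k : ℕ) : bseq (d+1) ∣ bseq ((d+1)*k) := by
  induction k with
  | zero => exact dvd_zero _
  | succ k IH =>
    rcases Nat.eq_zero_or_pos k with rfl | hk
    · simpa using dvd_refl (bseq (d+1))
    · obtain ⟨K, hK⟩ : ∃ K, (d+1)*k = K+1 :=
        ⟨(d+1)*k - 1, by have h := Nat.mul_pos (show 0 < d+1 by omega) hk; omega⟩
      have hAF := add_formula K d
      have hidx : K + d + 2 = (d+1)*(k+1) := by
        have e : (d+1)*(k+1) = (d+1)*k + (d+1) := by ring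
        omega
      rw [hidx, ← hK] at hAF
      have hdvd2 : bseq (d+1) ∣ 2 * bseq ((d+1)*(k+1)) := by
        rw [hAF]
        exact dvd_add (Dvd.intro_left _ rfl) (Dvd.dvd.mul_right IH _)
      exact odd_dvd_of_dvd_two_mul odd_b hdvd2

lemma anchor_unique (p m : ℕ) (ha7 : ¬ (7:ℤ) ∣ aseq (p+1)) (hb : bseq m = bseq (p+1))
    (hmod : m % 21 = p+1) (hsmall : p+1 < 21) : m = p+1 := by
  by_cases hm : m = p+1
  · exact hm
  · exfalso
    have hgt : p+1 < m := by
      rcases Nat.lt_or_ge m 21 with h | h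
      · rw [Nat.mod_eq_of_lt h] at hmod; omega
      · omega
    set t := m - (p+1) with htdef
    have ht0 : t ≠ 0 := by omega
    have h21 : 21 ∣ t := by omega
    set j := t.factorization 7 with hj
    have h7j : 7^j ∣ t := Nat.ordProj_dvd t 7
    have hcompl : ¬ 7 ∣ t / 7^j := Nat.not_dvd_ordCompl (by norm_num) ht0
    have heq : 7^j * (t / 7^j) = t := Nat.ordProj_mul_ordCompl_eq_self t 7
    have h3c : 3 ∣ t / 7^j := by
      have h3t : 3 ∣ t := dvd_trans ⟨7, rfl⟩ h21
      have hcop : Nat.Coprime 3 (7^j) := Nat.Coprime.pow_right _ (by norm_num)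
      exact hcop.dvd_of_dvd_mul_left (by rw [heq]; exact h3t)
    obtain ⟨s, hs⟩ := h3c
    have hs7 : ¬ 7 ∣ s := fun hd => hcompl (hs ▸ hd.mul_left 3)
    have hts : t = 3 * 7^j * s := by rw [← heq, hs]; ring
    have hmeq : m = p+1 + 3*7^j*s := by omega
    refine rigid p j s ?_ ha7 ?_
    · intro hd
      exact hs7 (by exact_mod_cast hd)
    · rw [← hmeq]; exact hb

lemma b_pm_one (m : ℕ) (h : bseq m = 1 ∨ bseq m = -1) :
    m = 1 ∨ m = 2 ∨ m = 3 ∨ m = 5 ∨ m = 13 := by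
  rcases h with h | h
  · rcases class_one m h with hc | hc
    · left
      exact anchor_unique 0 m (by norm_num [aseq]) (by rw [h]; rfl) hc (by norm_num)
    · right; left
      exact anchor_unique 1 m (by norm_num [aseq]) (by rw [h]; rfl) hc (by norm_num)
  · rcases class_negone m h with hc | hc | hc
    · right; right; left
      exact anchor_unique 2 m (by norm_num [aseq]) (by rw [h]; rfl) hc (by norm_num)
    · right; right; right; left
      exact anchor_unique 4 m (by norm_num [aseq]) (by rw [h]; rfl) hc (by norm_num)
    · right; right; right; right
      exact anchor_unique 12 m (by norm_num [aseq]) (by rw [h]; rfl) hc (by norm_num)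

lemma pow7_not {k e : ℕ} {V : ℤ} (h1 : (7:ℤ)^e < V) (h2 : V < 7^(e+1)) (h : (7:ℤ)^k = V) :
    False := by
  rcases le_or_gt k e with hle | hlt
  · have := pow_le_pow_right₀ (by norm_num : (1:ℤ) ≤ 7) hle
    linarith
  · have := pow_le_pow_right₀ (by norm_num : (1:ℤ) ≤ 7) (show e+1 ≤ k from hlt)
    linarith

lemma pow7_pos (k : ℕ) : (0:ℤ) < 7^k := pow_pos (by norm_num) k

lemma b_pow_seven (m k : ℕ) (hk : 1 ≤ k) (h : bseq m = 7^k ∨ bseq m = -7^k) :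
    m = 7 ∧ k = 1 := by
  have h7b : (7:ℤ) ∣ bseq m := by
    rcases h with h | h <;> rw [h]
    · exact dvd_pow_self 7 (by omega)
    · exact (dvd_neg).mpr (dvd_pow_self 7 (by omega))
  obtain ⟨c, hc⟩ := seven_dvd m h7b
  by_cases h49 : 7 ∣ c
  · exfalso
    obtain ⟨e, he⟩ := h49
    have hdvd : bseq 49 ∣ bseq m := by
      have := strong_dvd 48 e
      have hm : m = 49 * e := by omega
      rw [hm]; exact this
    have h97 : (97:ℤ) ∣ bseq m := dvd_trans ⟨76783, by norm_num [bseq]⟩ hdvd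
    have hp97 : Prime (97:ℤ) := by norm_num
    have h977 : (97:ℤ) ∣ 7^k := by
      rcases h with h | h <;> rw [h] at h97
      · exact h97
      · exact (dvd_neg).mp h97
    have := hp97.dvd_of_dvd_pow h977
    norm_num at this
  · have hc0 : c ≠ 0 := by rintro rfl; exact h49 (dvd_zero 7)
    have hsd : bseq c ∣ bseq m := by
      obtain ⟨c', rfl⟩ : ∃ c', c = c'+1 := ⟨c - 1, by omega⟩
      have := strong_dvd c' 7
      have hm : m = (c'+1) * 7 := by omega
      rw [hm]; exact this
    have hbc7 : bseq c ∣ (7:ℤ)^k := by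
      rcases h with h | h
      · rw [h] at hsd; exact hsd
      · rw [h] at hsd; exact (dvd_neg).mp hsd
    have h7bc : ¬ (7:ℤ) ∣ bseq c := fun hd => h49 (seven_dvd c hd)
    have hcop : IsCoprime (bseq c) 7 := by
      rw [Int.isCoprime_iff_gcd_eq_one]
      have hg7 : (Int.gcd (bseq c) 7) ∣ 7 := by
        have h := (Int.gcd_dvd_right _ _ : ((Int.gcd (bseq c) 7 : ℤ)) ∣ 7)
        exact_mod_cast h
      rcases (by norm_num : Nat.Prime 7).eq_one_or_self_of_dvd _ hg7 with h1 | h1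
      · exact h1
      · exfalso
        apply h7bc
        have h := (Int.gcd_dvd_left _ _ : ((Int.gcd (bseq c) 7 : ℤ)) ∣ bseq c)
        rw [h1] at h
        exact_mod_cast h
    have hunit : IsUnit (bseq c) := (hcop.pow_right).isUnit_of_dvd' dvd_rfl hbc7
    have hbc : bseq c = 1 ∨ bseq c = -1 := Int.isUnit_iff.mp hunit
    have hcval := b_pm_one c hbc
    rcases hcval with rfl | rfl | rfl | rfl | rfl
    · -- m = 7
      have hm : m = 7 := by omega
      subst hm
      have hb7 : bseq 7 = 7 := by norm_num [bseq]
      refine ⟨rfl, ?_⟩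
      rcases h with h | h
      · rw [hb7] at h
        by_contra hk1
        have hk2 : 2 ≤ k := by omega
        have := pow_le_pow_right₀ (by norm_num : (1:ℤ) ≤ 7) hk2
        rw [← h] at this
        norm_num at this
      · rw [hb7] at h
        have := pow7_pos k
        linarith
    · exfalso
      have hm : m = 14 := by omega
      subst hm
      have hb : bseq 14 = -91 := by norm_num [bseq]
      rw [hb] at h
      rcases h with h | h
      · have := pow7_pos k; linarith
      · exact pow7_not (show (7:ℤ)^2 < 91 by norm_num) (show (91:ℤ) < 7^(2+1) by norm_num)
          (show (7:ℤ)^k = 91 by linarith)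
    · exfalso
      have hm : m = 21 := by omega
      subst hm
      have hb : bseq 21 = 287 := by norm_num [bseq]
      rw [hb] at h
      rcases h with h | h
      · exact pow7_not (show (7:ℤ)^2 < 287 by norm_num) (show (287:ℤ) < 7^(2+1) by norm_num)
          (show (7:ℤ)^k = 287 by linarith)
      · have := pow7_pos k; linarith
    · exfalso
      have hm : m = 35 := by omega
      subst hm
      have hb : bseq 35 = -139657 := by norm_num [bseq]
      rw [hb] at h
      rcases h with h | h
      · have := pow7_pos k; linarith
      · exact pow7_not (show (7:ℤ)^6 < 139657 by norm_num)
          (show (139657:ℤ) < 7^(6+1) by norm_num) (show (7:ℤ)^k = 139657 by linarith)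
    · exfalso
      have hm : m = 91 := by omega
      subst hm
      have hb : bseq 91 = -3841716838057 := by norm_num [bseq]
      rw [hb] at h
      rcases h with h | h
      · have := pow7_pos k; linarith
      · exact pow7_not (show (7:ℤ)^14 < 3841716838057 by norm_num)
          (show (3841716838057:ℤ) < 7^(14+1) by norm_num)
          (show (7:ℤ)^k = 3841716838057 by linarith)

/-- The only solutions in positive integers of `x^2 + 7^(2k+1) = 2^n` with `k ≥ 0`,
`n ≥ 3` are `(|x|, k, n) ∈ {(1,0,3), (3,0,4), (5,0,5), (11,0,7), (13,1,9), (181,0,15)}`. -/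
theorem stmt_0 (x : ℤ) (k n : ℕ) (hn : 3 ≤ n) :
    x ^ 2 + 7 ^ (2 * k + 1) = 2 ^ n ↔
      (x.natAbs, k, n) = (1, 0, 3) ∨ (x.natAbs, k, n) = (3, 0, 4) ∨
      (x.natAbs, k, n) = (5, 0, 5) ∨ (x.natAbs, k, n) = (11, 0, 7) ∨
      (x.natAbs, k, n) = (13, 1, 9) ∨ (x.natAbs, k, n) = (181, 0, 15) := by
  constructor
  · intro he
    obtain ⟨p, rfl⟩ : ∃ p, n = p + 3 := ⟨n - 3, by omega⟩
    have hodd7 : Odd (7:ℤ) := ⟨3, by norm_num⟩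
    have hx : Odd x := by
      rcases Int.even_or_odd x with ⟨c, hc⟩ | hodd
      · exfalso
        have h4 : (4:ℤ) ∣ 7^(2*k+1) := by
          refine ⟨2^(p+1) - c^2, ?_⟩
          have h2 : (2:ℤ)^(p+3) = 4 * 2^(p+1) := by ring
          have hx2 : x^2 = 4 * c^2 := by rw [hc]; ring
          linarith [he, h2, hx2]
        obtain ⟨u, hu⟩ := hodd7.pow (n := 2*k+1)
        obtain ⟨v, hv⟩ := h4
        omega
      · exact hodd
    have hy : Odd ((7:ℤ)^k) := hodd7.pow
    have h7e : (7:ℤ)^(2*k+1) = 7 * ((7:ℤ)^k)^2 := by ring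
    have heq : x^2 + 7*((7:ℤ)^k)^2 = 2^(p+3) := by linarith [he, h7e]
    obtain ⟨hx1, hy1⟩ := rep p x (7^k) hx hy heq
    have habs : x.natAbs = (aseq (p+1)).natAbs := by
      rcases hx1 with h | h <;> simp [h]
    rcases Nat.eq_zero_or_pos k with rfl | hk
    · -- k = 0
      have hb1 : bseq (p+1) = 1 ∨ bseq (p+1) = -1 := by
        have h0 : (7:ℤ)^0 = 1 := by norm_num
        rcases hy1 with h | h
        · left; omega
        · right; omega
      rcases b_pm_one (p+1) hb1 with h | h | h | h | h
      · have hp : p = 0 := by omega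
        subst hp
        have : x.natAbs = 1 := by rw [habs]; norm_num [aseq]
        left; rw [this]
      · have hp : p = 1 := by omega
        subst hp
        have : x.natAbs = 3 := by rw [habs]; norm_num [aseq]
        right; left; rw [this]
      · have hp : p = 2 := by omega
        subst hp
        have : x.natAbs = 5 := by rw [habs]; norm_num [aseq]
        right; right; left; rw [this]
      · have hp : p = 4 := by omega
        subst hp
        have : x.natAbs = 11 := by rw [habs]; norm_num [aseq]
        right; right; right; left; rw [this]
      · have hp : p = 12 := by omega
        subst hp
        have : x.natAbs = 181 := by rw [habs]; norm_num [aseq]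
        right; right; right; right; right; rw [this]
    · -- k ≥ 1
      have hb7 : bseq (p+1) = 7^k ∨ bseq (p+1) = -7^k := by
        rcases hy1 with h | h
        · left; omega
        · right; omega
      obtain ⟨hm7, hk1⟩ := b_pow_seven (p+1) k hk hb7
      have hp : p = 6 := by omega
      subst hp hk1
      have : x.natAbs = 13 := by rw [habs]; norm_num [aseq]
      right; right; right; right; left; rw [this]
  · rintro (h | h | h | h | h | h) <;>
    · rw [Prod.mk.injEq, Prod.mk.injEq] at h
      obtain ⟨h1, h2, h3⟩ := h
      subst h2; subst h3
      rcases Int.natAbs_eq x with hx | hx <;> rw [h1] at hx <;> rw [hx] <;> norm_num
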